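/- Let G be a simple graph of order n ≥ 2. Then G is the paired coalition graph PCG(T, π) of some tree T with respect to some pc-partition π of T if and only if G is isomorphic to the star K_{1,n−1}. -/

import Mathlib

namespace PCPaper

variable {V : Type*}

/-- `S` is a dominating set of `G`. -/
def IsDomSet (G : SimpleGraph V) (S : Set V) : Prop :=
  ∀ v : V, v ∈ S ∨ ∃ u ∈ S, G.Adj u v

/-- `S` is a paired dominating set of `G`: a dominating set such that the subgraph of `G`
induced by `S` contains a perfect matching (a matching whose vertex set is exactly `S`). -/
def IsPairedDomSet (G : SimpleGraph V) (S : Set V) : Prop :=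
  IsDomSet G S ∧ ∃ M : G.Subgraph, M.verts = S ∧ M.IsMatching

/-- Disjoint sets `A`, `B`, neither a paired dominating set, whose union is one. -/
def PairedCoalition (G : SimpleGraph V) (A B : Set V) : Prop :=
  Disjoint A B ∧ ¬ IsPairedDomSet G A ∧ ¬ IsPairedDomSet G B ∧ IsPairedDomSet G (A ∪ B)

variable [Fintype V] [DecidableEq V]

/-- `π` is a paired coalition partition of `G`: no part is a paired dominating set and every
part forms a paired coalition with some other part. -/
def IsPCPartition (G : SimpleGraph V) (π : Finpartition (Finset.univ : Finset V)) : Prop :=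
  ∀ A ∈ π.parts, ¬ IsPairedDomSet G (A : Set V) ∧
    ∃ B ∈ π.parts, B ≠ A ∧ PairedCoalition G (A : Set V) (B : Set V)

/-- The paired coalition number: the maximum number of parts of a pc-partition of `G`,
and `0` if `G` admits no pc-partition. -/
noncomputable def pcNumber (G : SimpleGraph V) : ℕ :=
  sSup {k | ∃ π : Finpartition (Finset.univ : Finset V), IsPCPartition G π ∧ π.parts.card = k}

/-- The paired coalition graph of a partition `π` of `G`: vertices are the parts of `π`,
two parts being adjacent iff they form a paired coalition in `G`. -/
def PCG (G : SimpleGraph V) (π : Finpartition (Finset.univ : Finset V)) :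
    SimpleGraph {A : Finset V // A ∈ π.parts} where
  Adj A B := PairedCoalition G ((A : Finset V) : Set V) ((B : Finset V) : Set V)
  symm := by
    constructor
    rintro A B ⟨h1, h2, h3, h4⟩
    exact ⟨h1.symm, h3, h2, by rwa [Set.union_comm]⟩
  loopless := by
    constructor
    rintro A ⟨h1, h2, h3, h4⟩
    exact h2 (by rwa [Set.union_self] at h4)

end PCPaper


open PCPaper

section Aux

variable {V : Type*}

lemma not_pds_singleton (G : SimpleGraph V) (a : V) :
    ¬ IsPairedDomSet G ({a} : Set V) := by
  rintro ⟨-, M, hMv, hM⟩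
  have ha : a ∈ M.verts := by rw [hMv]; exact rfl
  obtain ⟨w, hw, -⟩ := hM ha
  have hwv : w ∈ M.verts := M.edge_vert hw.symm
  rw [hMv, Set.mem_singleton_iff] at hwv
  subst hwv
  exact (M.adj_sub hw).ne rfl

lemma forced_vertex {T : SimpleGraph V} {v u : V}
    (hadj : ∀ w, T.Adj v w ↔ w = u) :
    ∀ S, IsPairedDomSet T S → u ∈ S := by
  intro S hS
  by_cases hv : v ∈ S
  · obtain ⟨M, hMv, hM⟩ := hS.2
    obtain ⟨w, hw, -⟩ := hM (hMv ▸ hv)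
    have : w = u := (hadj w).mp (M.adj_sub hw)
    subst this
    exact hMv ▸ M.edge_vert hw.symm
  · obtain ⟨w, hwS, hw⟩ := (hS.1 v).resolve_left hv
    have : w = u := (hadj w).mp hw.symm
    exact this ▸ hwS

lemma iso_star {α : Type*} [Fintype α] [DecidableEq α] (H : SimpleGraph α) (p : α) {n : ℕ}
    (hcard : Fintype.card α = n)
    (key : ∀ a b, H.Adj a b ↔ a ≠ b ∧ (a = p ∨ b = p)) :
    Nonempty (H ≃g completeBipartiteGraph (Fin 1) (Fin (n - 1))) := by
  have hc : Fintype.card {x : α // ¬ x = p} = n - 1 := by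
    rw [Fintype.card_subtype_compl, Fintype.card_subtype_eq, hcard]
  let f : Fin (n - 1) ≃ {x : α // ¬ x = p} := (Fintype.equivFinOfCardEq hc).symm
  let e1 : Fin 1 ≃ {x : α // x = p} :=
    { toFun := fun _ => ⟨p, rfl⟩
      invFun := fun _ => 0
      left_inv := fun i => Subsingleton.elim _ _
      right_inv := fun x => by rcases x with ⟨x, rfl⟩; rfl }
  let e : Fin 1 ⊕ Fin (n - 1) ≃ α := (e1.sumCongr f).trans (Equiv.sumCompl (· = p))
  have he1 : ∀ i, e (Sum.inl i) = p := fun i => rfl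
  have he2 : ∀ j, e (Sum.inr j) = (f j).val := fun j => rfl
  have hmain : ∀ x y, H.Adj (e x) (e y) ↔
      (completeBipartiteGraph (Fin 1) (Fin (n - 1))).Adj x y := by
    rintro (i | j) (i' | j') <;>
      simp only [he1, he2, key, completeBipartiteGraph, ne_eq]
    · simp
    · simp only [Sum.isLeft, Sum.isRight]
      have := (f j').2
      tauto
    · simp only [Sum.isLeft, Sum.isRight]
      have := (f j).2
      tauto
    · simp only [Sum.isLeft, Sum.isRight]
      have := (f j).2
      have := (f j').2
      tauto
  exact ⟨(⟨e, fun {x y} => hmain x y⟩ :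
    completeBipartiteGraph (Fin 1) (Fin (n - 1)) ≃g H).symm⟩

end Aux


open Finset in
/-- Every finite tree with at least two vertices has a leaf. -/
lemma tree_exists_leaf {V : Type*} [Fintype V] [DecidableEq V] {T : SimpleGraph V}
    (hT : T.IsTree) (hcard : 2 ≤ Fintype.card V) :
    ∃ v u : V, ∀ w, T.Adj v w ↔ w = u := by
  classical
  haveI : DecidableRel T.Adj := Classical.decRel _
  have hedge : T.edgeFinset.card + 1 = Fintype.card V := hT.card_edgeFinset
  have hsum : ∑ v, T.degree v = 2 * T.edgeFinset.card :=
    T.sum_degrees_eq_twice_card_edges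
  -- some vertex has degree ≤ 1
  have hlow : ∃ v : V, T.degree v ≤ 1 := by
    by_contra hall
    push_neg at hall
    have : 2 * Fintype.card V ≤ ∑ v, T.degree v := by
      calc 2 * Fintype.card V = ∑ _v : V, 2 := by
            simp [Finset.sum_const, mul_comm]
        _ ≤ ∑ v, T.degree v := Finset.sum_le_sum fun v _ => hall v
    omega
  obtain ⟨v, hv⟩ := hlow
  -- degree ≥ 1 by connectivity
  have hpos : 1 ≤ T.degree v := by
    obtain ⟨w, hw⟩ := Fintype.exists_ne_of_one_lt_card (by omega) v
    obtain ⟨p⟩ := hT.isConnected.preconnected v w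
    cases p with
    | nil => exact absurd rfl hw
    | cons h q =>
      rw [← SimpleGraph.card_neighborFinset_eq_degree]
      exact Finset.card_pos.mpr ⟨_, (SimpleGraph.mem_neighborFinset _ _ _).mpr h⟩
  have hdeg : T.degree v = 1 := le_antisymm hv hpos
  rw [← SimpleGraph.card_neighborFinset_eq_degree, Finset.card_eq_one] at hdeg
  obtain ⟨u, hu⟩ := hdeg
  refine ⟨v, u, fun w => ?_⟩
  rw [← SimpleGraph.mem_neighborFinset, hu, Finset.mem_singleton]


/-- For a tree `T` and a pc-partition `π` with `n` parts, `PCG T π` is a star. -/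
lemma pcg_tree_star {m : ℕ} {T : SimpleGraph (Fin m)} (hT : T.IsTree)
    {π : Finpartition (Finset.univ : Finset (Fin m))} (hπ : IsPCPartition T π)
    {n : ℕ} (hcard : Fintype.card {A : Finset (Fin m) // A ∈ π.parts} = n) (h2 : 2 ≤ n) :
    Nonempty (PCG T π ≃g completeBipartiteGraph (Fin 1) (Fin (n - 1))) := by
  classical
  have hpc : π.parts.card = n := by
    rw [← hcard]; exact (Fintype.card_coe π.parts).symm
  have hm : 2 ≤ m := by
    have := π.card_parts_le_card
    simp only [Finset.card_univ, Fintype.card_fin] at this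
    omega
  obtain ⟨v, u, hadj⟩ := tree_exists_leaf hT (by simpa using hm)
  have hu := forced_vertex hadj
  obtain ⟨Pt, hPt, huPt⟩ := π.exists_mem (Finset.mem_univ u)
  set p : {A : Finset (Fin m) // A ∈ π.parts} := ⟨Pt, hPt⟩ with hp
  have hmemP : ∀ A : {A : Finset (Fin m) // A ∈ π.parts}, u ∈ (A : Finset (Fin m)) → A = p := by
    rintro ⟨A, hA⟩ hmem
    exact Subtype.ext (π.eq_of_mem_parts hA hPt hmem huPt)
  have key : ∀ A B, (PCG T π).Adj A B ↔ A ≠ B ∧ (A = p ∨ B = p) := by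
    intro A B
    constructor
    · rintro hAB
      obtain ⟨hdis, -, -, hPDS⟩ := hAB
      have hune : u ∈ ((A : Finset (Fin m)) : Set (Fin m)) ∪ ((B : Finset (Fin m)) : Set (Fin m)) :=
        hu _ hPDS
      refine ⟨?_, ?_⟩
      · rintro rfl
        obtain ⟨x, hx⟩ := π.nonempty_of_mem_parts A.2
        exact (hdis.le_bot ⟨by simpa using hx, by simpa using hx⟩)
      · rcases hune with h | h
        · exact Or.inl (hmemP A (by simpa using h))
        · exact Or.inr (hmemP B (by simpa using h))
    · rintro ⟨hne, hor⟩
      have main : ∀ C : {A : Finset (Fin m) // A ∈ π.parts}, C ≠ p → (PCG T π).Adj C p := by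
        intro C hC
        obtain ⟨-, D, hD, hDC, hcoal⟩ := hπ C.1 C.2
        have : (⟨D, hD⟩ : {A : Finset (Fin m) // A ∈ π.parts}) = p := by
          apply hmemP
          have hune := hu _ hcoal.2.2.2
          rcases hune with h | h
          · exact absurd (hmemP C (by simpa using h)) hC
          · simpa using h
        have : D = Pt := congrArg Subtype.val this
        subst this
        exact hcoal
      rcases hor with rfl | rfl
      · exact ((main B (Ne.symm hne)).symm)
      · exact main A hne
  exact iso_star _ p hcard key

/-- The star graph on `Fin m` with center `0`. -/
def StarG (m : ℕ) : SimpleGraph (Fin m) where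
  Adj i j := i ≠ j ∧ ((i : ℕ) = 0 ∨ (j : ℕ) = 0)
  symm := by constructor; rintro i j ⟨h1, h2⟩; exact ⟨h1.symm, h2.symm⟩
  loopless := by constructor; rintro i ⟨h1, -⟩; exact h1 rfl

lemma starG_isTree {n : ℕ} (h2 : 2 ≤ n) : (StarG n).IsTree := by
  haveI : NeZero n := ⟨by omega⟩
  have hadj0 : ∀ i : Fin n, i ≠ 0 → (StarG n).Adj i 0 :=
    fun i hi => ⟨hi, Or.inr rfl⟩
  constructor
  · -- connected
    refine ⟨fun u v => ?_⟩
    have h : ∀ w : Fin n, (StarG n).Reachable w 0 := by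
      intro w
      by_cases hw : w = 0
      · subst hw; exact SimpleGraph.Reachable.refl 0
      · exact (hadj0 w hw).reachable
    exact (h u).trans (h v).symm
  · -- acyclic
    have vz : ∀ a : Fin n, (a : ℕ) = 0 → a = 0 := fun a ha => Fin.ext (by simp [ha])
    have key : ∀ c : (StarG n).Walk 0 0, ¬ c.IsCycle := by
      intro c hc
      cases c with
      | nil => exact SimpleGraph.Walk.IsCycle.not_of_nil hc
      | cons h p =>
        rename_i b
        have hb : b ≠ 0 := h.ne'
        cases p with
        | nil => exact hb rfl
        | cons h2 r =>
          rename_i z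
          have hz : z = 0 := by
            rcases h2.2 with hb0 | hz0
            · exact absurd (vz _ hb0) hb
            · exact vz _ hz0
          subst hz
          cases r with
          | nil =>
            have := hc.three_le_length
            simp [SimpleGraph.Walk.length_cons] at this
          | cons h3 s =>
            have hnd := hc.2
            simp only [SimpleGraph.Walk.support_cons, List.tail_cons, List.nodup_cons] at hnd
            exact hnd.2.1 s.end_mem_support
    intro v c hc
    have h0 : (0 : Fin n) ∈ c.support := by
      cases c with
      | nil => exact absurd hc SimpleGraph.Walk.IsCycle.not_of_nil
      | cons h p =>
        rcases h.2 with hv | hw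
        · exact vz _ hv ▸ SimpleGraph.Walk.start_mem_support _
        · rw [SimpleGraph.Walk.support_cons]
          exact List.mem_cons_of_mem _ (vz _ hw ▸ SimpleGraph.Walk.start_mem_support p)
    exact key _ (hc.rotate h0)

lemma star_pds {n : ℕ} [NeZero n] (h2 : 2 ≤ n) (i : Fin n) (hi : i ≠ 0) :
    IsPairedDomSet (StarG n) ({0, i} : Set (Fin n)) := by
  have hadj : (StarG n).Adj 0 i := ⟨Ne.symm hi, Or.inl (by simp)⟩
  refine ⟨?_, (StarG n).subgraphOfAdj hadj, by simp, SimpleGraph.Subgraph.IsMatching.subgraphOfAdj hadj⟩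
  intro w
  by_cases hw : w = 0
  · exact Or.inl (by simp [hw])
  · exact Or.inr ⟨0, by simp, ⟨Ne.symm hw, Or.inl (by simp)⟩⟩

lemma star_pcpartition {n : ℕ} (h2 : 2 ≤ n) :
    IsPCPartition (StarG n) (⊥ : Finpartition (Finset.univ : Finset (Fin n))) := by
  haveI : NeZero n := ⟨by omega⟩
  intro A hA
  rw [Finpartition.mem_bot_iff] at hA
  obtain ⟨a, -, rfl⟩ := hA
  refine ⟨by simpa using not_pds_singleton (StarG n) a, ?_⟩
  by_cases ha : a = 0
  · subst ha
    set b : Fin n := ⟨1, by omega⟩ with hbdef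
    have hb : b ≠ 0 := by
      intro h
      have := congrArg Fin.val h
      simp [hbdef] at this
    refine ⟨{b}, ?_, ?_, ?_, ?_, ?_, ?_⟩
    · rw [Finpartition.mem_bot_iff]; exact ⟨b, Finset.mem_univ _, rfl⟩
    · simpa [Finset.singleton_inj] using hb
    · simpa using Ne.symm hb
    · simpa using not_pds_singleton (StarG n) (0 : Fin n)
    · simpa using not_pds_singleton (StarG n) b
    · have : ((({0} : Finset (Fin n)) : Set (Fin n)) ∪ (({b} : Finset (Fin n)) : Set (Fin n)))
          = ({0, b} : Set (Fin n)) := by ext x; simp [or_comm]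
      rw [this]
      exact star_pds h2 b hb
  · refine ⟨{0}, ?_, ?_, ?_, ?_, ?_, ?_⟩
    · rw [Finpartition.mem_bot_iff]; exact ⟨0, Finset.mem_univ _, rfl⟩
    · simpa [Finset.singleton_inj] using Ne.symm ha
    · simpa using ha
    · simpa using not_pds_singleton (StarG n) a
    · simpa using not_pds_singleton (StarG n) (0 : Fin n)
    · have : ((({a} : Finset (Fin n)) : Set (Fin n)) ∪ (({0} : Finset (Fin n)) : Set (Fin n)))
          = ({0, a} : Set (Fin n)) := by
        ext x; simp [or_comm]
      rw [this]
      exact star_pds h2 a ha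


open PCPaper in
/-- A graph of order `n ≥ 2` is the paired coalition graph of some tree with respect to
some pc-partition iff it is isomorphic to the star `K_{1,n-1}`. -/
theorem stmt_13 {W : Type*} [Fintype W] (G : SimpleGraph W) (n : ℕ)
    (hn : Fintype.card W = n) (h2 : 2 ≤ n) :
    (∃ (m : ℕ) (T : SimpleGraph (Fin m)) (π : Finpartition (Finset.univ : Finset (Fin m))),
        T.IsTree ∧ IsPCPartition T π ∧ Nonempty (G ≃g PCG T π)) ↔
    Nonempty (G ≃g completeBipartiteGraph (Fin 1) (Fin (n - 1))) := by
  constructor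
  · rintro ⟨m, T, π, hT, hπ, ⟨φ⟩⟩
    have hcard : Fintype.card {A : Finset (Fin m) // A ∈ π.parts} = n := by
      rw [← hn]; exact (Fintype.card_congr φ.toEquiv).symm
    obtain ⟨ψ⟩ := pcg_tree_star hT hπ hcard h2
    exact ⟨φ.trans ψ⟩
  · rintro ⟨φ⟩
    refine ⟨n, StarG n, ⊥, starG_isTree h2, star_pcpartition h2, ?_⟩
    have hcard : Fintype.card
        {A : Finset (Fin n) // A ∈ (⊥ : Finpartition (Finset.univ : Finset (Fin n))).parts} = n := by
      rw [Fintype.card_coe, Finpartition.card_bot, Finset.card_univ, Fintype.card_fin]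
    obtain ⟨ψ⟩ := pcg_tree_star (starG_isTree h2) (star_pcpartition h2) hcard h2
    exact ⟨φ.trans ψ.symm⟩
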